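/- Let P be a probability measure supported on [a,b] with 0 < a < b < ∞, and let λ_min be defined as in the paper via μ₀. Moreover λ_min is strictly increasing on (0,1) and strictly decreasing on (1,∞) as a function of φ. -/

import Mathlib

open MeasureTheory

section Aux

variable {a b : ℝ} {P : Measure ℝ} [IsProbabilityMeasure P]

/-- integrability from an a.e. bound on the support interval -/
lemma aux_integrable (hsupp : ∀ᵐ r ∂P, r ∈ Set.Icc a b)
    (f : ℝ → ℝ) (hf : AEStronglyMeasurable f P)
    (C : ℝ) (hC : ∀ r ∈ Set.Icc a b, |f r| ≤ C) : Integrable f P :=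
  (integrable_const C).mono' hf (hsupp.mono fun r hr => hC r hr)

lemma aux_int_div (ha : 0 < a) (hab : a < b) (hsupp : ∀ᵐ r ∂P, r ∈ Set.Icc a b)
    {μ : ℝ} (hμ : -a < μ) : Integrable (fun r => r / (μ + r)) P := by
  have hden : (0:ℝ) < μ + a := by linarith
  refine aux_integrable hsupp _ ?_ (b / (μ + a)) ?_
  · exact (measurable_id.div (measurable_const.add measurable_id)).aestronglyMeasurable
  · rintro r ⟨h1, h2⟩
    have hr0 : 0 < r := lt_of_lt_of_le ha h1
    have hμr : 0 < μ + r := by linarith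
    rw [abs_of_nonneg (div_nonneg hr0.le hμr.le)]
    exact div_le_div₀ (by linarith) (by linarith) hden (by linarith)

lemma aux_int_div2 (ha : 0 < a) (hab : a < b) (hsupp : ∀ᵐ r ∂P, r ∈ Set.Icc a b)
    {μ ν : ℝ} (hμ : -a < μ) (hν : -a < ν) :
    Integrable (fun r => r ^ 2 / ((μ + r) * (ν + r))) P := by
  have hdenμ : (0:ℝ) < μ + a := by linarith
  have hdenν : (0:ℝ) < ν + a := by linarith
  refine aux_integrable hsupp _ ?_ (b ^ 2 / ((μ + a) * (ν + a))) ?_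
  · exact ((measurable_id.pow_const 2).div
      ((measurable_const.add measurable_id).mul
        (measurable_const.add measurable_id))).aestronglyMeasurable
  · rintro r ⟨h1, h2⟩
    have hr0 : 0 < r := lt_of_lt_of_le ha h1
    have hμr : 0 < μ + r := by linarith
    have hνr : 0 < ν + r := by linarith
    rw [abs_of_nonneg (div_nonneg (by positivity) (by positivity))]
    apply div_le_div₀ (by positivity) (by nlinarith) (by positivity)
    nlinarith

lemma aux_int_sq (ha : 0 < a) (hab : a < b) (hsupp : ∀ᵐ r ∂P, r ∈ Set.Icc a b)
    {μ : ℝ} (hμ : -a < μ) : Integrable (fun r => (r / (μ + r)) ^ 2) P := by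
  have h := aux_int_div2 ha hab hsupp hμ hμ
  refine h.congr (Filter.Eventually.of_forall fun r => ?_)
  show r ^ 2 / ((μ + r) * (μ + r)) = (r / (μ + r)) ^ 2
  rw [div_pow]; ring

/-- positivity of `∫ r/(μ+r)` -/
lemma aux_J_pos (ha : 0 < a) (hab : a < b) (hsupp : ∀ᵐ r ∂P, r ∈ Set.Icc a b)
    {μ : ℝ} (hμ : -a < μ) : 0 < ∫ r, r / (μ + r) ∂P := by
  have hb : (0:ℝ) < μ + b := by linarith
  have hc : (0:ℝ) < a / (μ + b) := by positivity
  have hmono : ∫ r, (a / (μ + b) : ℝ) ∂P ≤ ∫ r, r / (μ + r) ∂P := by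
    refine integral_mono_ae (integrable_const _) (aux_int_div ha hab hsupp hμ)
      (hsupp.mono ?_)
    rintro r ⟨h1, h2⟩
    exact div_le_div₀ (by linarith) h1 (by linarith) (by linarith)
  calc (0:ℝ) < a / (μ + b) := hc
    _ = ∫ _r, (a / (μ + b) : ℝ) ∂P := by simp
    _ ≤ _ := hmono

end Aux

/-- The minimum ridge penalty `λ_min` is strictly increasing on `(0,1)` and
strictly decreasing on `(1,∞)` as a function of the aspect ratio `φ`. -/
theorem lambda_min_monotonicity (a b : ℝ) (ha : 0 < a) (hab : a < b)
    (P : Measure ℝ) [IsProbabilityMeasure P]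
    (hsupp : ∀ᵐ r ∂P, r ∈ Set.Icc a b)
    (μ₀ : ℝ → ℝ)
    (hμ₀ : ∀ φ : ℝ, 0 < φ →
      -a < μ₀ φ ∧ 1 = φ * ∫ r, (r / (μ₀ φ + r)) ^ 2 ∂P) :
    StrictMonoOn (fun φ => μ₀ φ * (1 - φ * ∫ r, r / (μ₀ φ + r) ∂P))
        (Set.Ioo 0 1) ∧
      StrictAntiOn (fun φ => μ₀ φ * (1 - φ * ∫ r, r / (μ₀ φ + r) ∂P))
        (Set.Ioi 1) := by
  -- key minimality lemma: μ₀ φ minimizes g(μ, φ) = μ (1 - φ ∫ r/(μ+r))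
  have key : ∀ φ : ℝ, 0 < φ → ∀ μ : ℝ, -a < μ →
      μ₀ φ * (1 - φ * ∫ r, r / (μ₀ φ + r) ∂P) ≤
        μ * (1 - φ * ∫ r, r / (μ + r) ∂P) := by
    intro φ hφ μ hμ
    obtain ⟨hν, hc⟩ := hμ₀ φ hφ
    set ν := μ₀ φ with hνdef
    have hJμ := aux_int_div ha hab hsupp hμ
    have hJν := aux_int_div ha hab hsupp hν
    have hT := aux_int_div2 ha hab hsupp hμ hν
    have hIν := aux_int_div2 ha hab hsupp hν hν
    -- the difference identity
    have hdiff : μ * (1 - φ * ∫ r, r / (μ + r) ∂P)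
        - ν * (1 - φ * ∫ r, r / (ν + r) ∂P)
        = (μ - ν) * (1 - φ * ∫ r, r ^ 2 / ((μ + r) * (ν + r)) ∂P) := by
      have h1 : ∫ r, (μ * (r / (μ + r)) - ν * (r / (ν + r))) ∂P
          = μ * (∫ r, r / (μ + r) ∂P) - ν * ∫ r, r / (ν + r) ∂P := by
        rw [integral_sub (hJμ.const_mul μ) (hJν.const_mul ν),
          integral_const_mul, integral_const_mul]
      have h2 : ∫ r, (μ * (r / (μ + r)) - ν * (r / (ν + r))) ∂P
          = (μ - ν) * ∫ r, r ^ 2 / ((μ + r) * (ν + r)) ∂P := by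
        rw [← integral_const_mul]
        refine integral_congr_ae (hsupp.mono ?_)
        rintro r ⟨h1, h2⟩
        have hμr : (0:ℝ) < μ + r := by linarith
        have hνr : (0:ℝ) < ν + r := by linarith
        field_simp
        ring
      nlinarith [h1.symm.trans h2]
    -- the constraint integral rewritten
    have hIeq : ∫ r, r ^ 2 / ((ν + r) * (ν + r)) ∂P
        = ∫ r, (r / (ν + r)) ^ 2 ∂P := by
      refine integral_congr_ae (Filter.Eventually.of_forall fun r => ?_)
      show r ^ 2 / ((ν + r) * (ν + r)) = (r / (ν + r)) ^ 2
      rw [div_pow]; ring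
    rcases le_or_gt ν μ with hle | hlt
    · -- T ≤ I(ν) = 1/φ
      have hTle : ∫ r, r ^ 2 / ((μ + r) * (ν + r)) ∂P
          ≤ ∫ r, r ^ 2 / ((ν + r) * (ν + r)) ∂P := by
        refine integral_mono_ae hT hIν (hsupp.mono ?_)
        rintro r ⟨h1, h2⟩
        have hνr : (0:ℝ) < ν + r := by linarith
        have hμr : (0:ℝ) < μ + r := by linarith
        show r ^ 2 / ((μ + r) * (ν + r)) ≤ r ^ 2 / ((ν + r) * (ν + r))
        gcongr r ^ 2 / ?_
        nlinarith
      have hc' : 1 = φ * ∫ r, r ^ 2 / ((ν + r) * (ν + r)) ∂P := by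
        rw [hIeq]; exact hc
      have hT1 : φ * ∫ r, r ^ 2 / ((μ + r) * (ν + r)) ∂P ≤ 1 := by
        rw [hc']; exact mul_le_mul_of_nonneg_left hTle hφ.le
      have hprod := mul_nonneg (sub_nonneg.mpr hle)
        (by linarith : (0:ℝ) ≤ 1 - φ * ∫ r, r ^ 2 / ((μ + r) * (ν + r)) ∂P)
      nlinarith [hdiff, hprod]
    · -- T ≥ I(ν) = 1/φ
      have hTge : ∫ r, r ^ 2 / ((ν + r) * (ν + r)) ∂P
          ≤ ∫ r, r ^ 2 / ((μ + r) * (ν + r)) ∂P := by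
        refine integral_mono_ae hIν hT (hsupp.mono ?_)
        rintro r ⟨h1, h2⟩
        have hμr : (0:ℝ) < μ + r := by linarith
        have hνr : (0:ℝ) < ν + r := by linarith
        show r ^ 2 / ((ν + r) * (ν + r)) ≤ r ^ 2 / ((μ + r) * (ν + r))
        gcongr r ^ 2 / ?_
        nlinarith
      have hc' : 1 = φ * ∫ r, r ^ 2 / ((ν + r) * (ν + r)) ∂P := by
        rw [hIeq]; exact hc
      have hT1 : 1 ≤ φ * ∫ r, r ^ 2 / ((μ + r) * (ν + r)) ∂P := by
        rw [hc']; exact mul_le_mul_of_nonneg_left hTge hφ.le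
      have hprod := mul_nonneg
        (by linarith : (0:ℝ) ≤ ν - μ)
        (by linarith : (0:ℝ) ≤ φ * (∫ r, r ^ 2 / ((μ + r) * (ν + r)) ∂P) - 1)
      nlinarith [hdiff, hprod]
  -- sign of μ₀
  have hsign1 : ∀ φ : ℝ, 0 < φ → φ < 1 → μ₀ φ < 0 := by
    intro φ hφ hφ1
    obtain ⟨hν, hc⟩ := hμ₀ φ hφ
    by_contra h
    push_neg at h
    have hIle : ∫ r, (r / (μ₀ φ + r)) ^ 2 ∂P ≤ ∫ _r, (1:ℝ) ∂P := by
      refine integral_mono_ae (aux_int_sq ha hab hsupp hν) (integrable_const 1)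
        (hsupp.mono ?_)
      rintro r ⟨h1, h2⟩
      have hr0 : 0 < r := lt_of_lt_of_le ha h1
      have : r / (μ₀ φ + r) ≤ 1 := by
        rw [div_le_one (by linarith)]; linarith
      nlinarith [div_nonneg hr0.le (by linarith : (0:ℝ) ≤ μ₀ φ + r)]
    simp only [integral_const, probReal_univ, smul_eq_mul,
      one_mul] at hIle
    nlinarith
  have hsign2 : ∀ φ : ℝ, 1 < φ → 0 < μ₀ φ := by
    intro φ hφ1
    have hφ : (0:ℝ) < φ := by linarith
    obtain ⟨hν, hc⟩ := hμ₀ φ hφ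
    by_contra h
    push_neg at h
    have hIge : ∫ _r, (1:ℝ) ∂P ≤ ∫ r, (r / (μ₀ φ + r)) ^ 2 ∂P := by
      refine integral_mono_ae (integrable_const 1) (aux_int_sq ha hab hsupp hν)
        (hsupp.mono ?_)
      rintro r ⟨h1, h2⟩
      have hr0 : 0 < r := lt_of_lt_of_le ha h1
      have hd : (0:ℝ) < μ₀ φ + r := by linarith
      have h1' : 1 ≤ r / (μ₀ φ + r) := by
        rw [le_div_iff₀ hd]; linarith
      nlinarith
    simp only [integral_const, probReal_univ, smul_eq_mul,
      one_mul] at hIge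
    nlinarith
  constructor
  · rintro φ₁ ⟨hφ₁0, hφ₁1⟩ φ₂ ⟨hφ₂0, hφ₂1⟩ h12
    have hμ₂ := (hμ₀ φ₂ hφ₂0).1
    have hJ₂ := aux_J_pos ha hab hsupp hμ₂
    have hneg := hsign1 φ₂ hφ₂0 hφ₂1
    calc μ₀ φ₁ * (1 - φ₁ * ∫ r, r / (μ₀ φ₁ + r) ∂P)
        ≤ μ₀ φ₂ * (1 - φ₁ * ∫ r, r / (μ₀ φ₂ + r) ∂P) := key φ₁ hφ₁0 (μ₀ φ₂) hμ₂
      _ < μ₀ φ₂ * (1 - φ₂ * ∫ r, r / (μ₀ φ₂ + r) ∂P) := by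
          nlinarith [mul_pos (mul_pos (sub_pos.mpr h12) hJ₂) (neg_pos.mpr hneg)]
  · rintro φ₁ hφ₁ φ₂ hφ₂ h12
    simp only [Set.mem_Ioi] at hφ₁ hφ₂
    have hφ₂0 : (0:ℝ) < φ₂ := by linarith
    have hμ₁ := (hμ₀ φ₁ (by linarith)).1
    have hJ₁ := aux_J_pos ha hab hsupp hμ₁
    have hpos := hsign2 φ₁ hφ₁
    calc μ₀ φ₂ * (1 - φ₂ * ∫ r, r / (μ₀ φ₂ + r) ∂P)
        ≤ μ₀ φ₁ * (1 - φ₂ * ∫ r, r / (μ₀ φ₁ + r) ∂P) := key φ₂ hφ₂0 (μ₀ φ₁) hμ₁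
      _ < μ₀ φ₁ * (1 - φ₁ * ∫ r, r / (μ₀ φ₁ + r) ∂P) := by
          nlinarith [mul_pos (mul_pos hpos (sub_pos.mpr h12)) hJ₁]
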